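/- Let ε ∈ [0,1) and let 𝓟 and 𝓔 be nonempty sets of density matrices on ℂ^d. Define α* as the infimum, over all tests E (Hermitian with 0 ≤ E ≤ I) satisfying sup_{ρ∈𝓟} tr[(I−E)ρ] ≤ ε, of sup_{τ∈𝓔} tr[Eτ]. Say that M > 1 is achievable if there exists a CPTP map F from d×d complex matrices to 2×2 complex matrices with T(F(ρ), |1⟩⟨1|) ≤ ε for all ρ ∈ 𝓟 and such that for every τ ∈ 𝓔 there exists M_τ ∈ [M,∞) with F(τ) = π_{M_τ}. Then: (a) every achievable M satisfies M ≤ 1/α* (in particular, if α* = 0 every M is permitted); and (b) every M with 1 < M < 1/α* is achievable. -/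

import Mathlib

open Matrix ComplexOrder

/-- Trace norm of a complex matrix: the trace of `sqrt(AᴴA)` (sum of singular values). -/
noncomputable def traceNorm {n : Type*} [Fintype n] [DecidableEq n]
    (A : Matrix n n ℂ) : ℝ :=
  (((Matrix.posSemidef_conjTranspose_mul_self A).1.eigenvectorUnitary.1 *
      Matrix.diagonal ((fun x : ℝ => (x : ℂ)) ∘ (Real.sqrt ·) ∘ (Matrix.posSemidef_conjTranspose_mul_self A).1.eigenvalues) *
      (star (Matrix.posSemidef_conjTranspose_mul_self A).1.eigenvectorUnitary : Matrix n n ℂ)).trace).re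

/-- Trace distance `T(X,Y) = ‖X - Y‖₁ / 2`. -/
noncomputable def traceDist {n : Type*} [Fintype n] [DecidableEq n]
    (X Y : Matrix n n ℂ) : ℝ :=
  traceNorm (X - Y) / 2

/-- A density matrix: positive semidefinite with unit trace. -/
def IsDensityMatrix {n : Type*} [Fintype n] (ρ : Matrix n n ℂ) : Prop :=
  ρ.PosSemidef ∧ ρ.trace = 1

/-- The battery Gibbs state `π_M = diag(1 - 1/M, 1/M)`. -/
noncomputable def piM (M : ℝ) : Matrix (Fin 2) (Fin 2) ℂ :=
  Matrix.diagonal ![((1 - 1/M : ℝ) : ℂ), ((1/M : ℝ) : ℂ)]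

/-- The excited battery state `|1⟩⟨1| = diag(0,1)`. -/
def ket1 : Matrix (Fin 2) (Fin 2) ℂ :=
  Matrix.diagonal ![0, 1]

/-- A test (POVM effect): `0 ≤ E ≤ I`. -/
def IsTest {n : Type*} [Fintype n] [DecidableEq n] (E : Matrix n n ℂ) : Prop :=
  E.PosSemidef ∧ (1 - E).PosSemidef

/-- Choi matrix `Σ_{ij} E_{ij} ⊗ F(E_{ij})` of a linear map on matrices. -/
noncomputable def choiMatrix {n m : Type*} [Fintype n] [DecidableEq n] [Fintype m]
    (F : Matrix n n ℂ →ₗ[ℂ] Matrix m m ℂ) :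
    Matrix (n × m) (n × m) ℂ :=
  fun p q => F (Matrix.single p.1 q.1 1) p.2 q.2

/-- Completely positive (positive semidefinite Choi matrix) and trace preserving. -/
def IsCPTP {n m : Type*} [Fintype n] [DecidableEq n] [Fintype m]
    (F : Matrix n n ℂ →ₗ[ℂ] Matrix m m ℂ) : Prop :=
  (choiMatrix F).PosSemidef ∧ ∀ X, (F X).trace = X.trace

/-- `n`-fold Kronecker (tensor) power of a `2 × 2` matrix, indexed by bit strings. -/
def tensPow (A : Matrix (Fin 2) (Fin 2) ℂ) (n : ℕ) :
    Matrix (Fin n → Fin 2) (Fin n → Fin 2) ℂ :=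
  fun x y => ∏ i, A (x i) (y i)

/-- `ε`-ball (in trace distance) of density matrices around a set `𝓟`. -/
noncomputable def metBall {n : Type*} [Fintype n] [DecidableEq n]
    (ε : ℝ) (P : Set (Matrix n n ℂ)) : Set (Matrix n n ℂ) :=
  {ω | IsDensityMatrix ω ∧ ∃ ρ ∈ P, traceDist ω ρ ≤ ε}

/-- `M` is an achievable dirty-battery work-extraction capacity from `(𝓟, 𝓔)`
with error `ε` under CPTP maps. -/
def AchievableDirty {d : ℕ} (ε M : ℝ) (𝓟 𝓔 : Set (Matrix (Fin d) (Fin d) ℂ)) : Prop :=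
  ∃ F : Matrix (Fin d) (Fin d) ℂ →ₗ[ℂ] Matrix (Fin 2) (Fin 2) ℂ,
    IsCPTP F ∧ (∀ ρ ∈ 𝓟, traceDist (F ρ) ket1 ≤ ε) ∧
    ∀ τ ∈ 𝓔, ∃ Mτ : ℝ, M ≤ Mτ ∧ F τ = piM Mτ


/-! ### Auxiliary lemmas -/

section StmtEightAux

lemma cx_nonneg_re {z : ℂ} (h : 0 ≤ z) : 0 ≤ z.re := by
  rw [Complex.le_def] at h; simpa using h.1

lemma cx_nonneg_im {z : ℂ} (h : 0 ≤ z) : z.im = 0 := by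
  rw [Complex.le_def] at h; simpa using h.2.symm

lemma cx_nonneg_eq_re {z : ℂ} (h : 0 ≤ z) : z = ((z.re : ℝ) : ℂ) :=
  Complex.ext rfl (cx_nonneg_im h)

lemma psd_one' {n : Type*} [Fintype n] [DecidableEq n] :
    (1 : Matrix n n ℂ).PosSemidef := by
  rw [← Matrix.diagonal_one]
  exact Matrix.PosSemidef.diagonal fun i => zero_le_one

lemma psd_zero' {n : Type*} [Fintype n] [DecidableEq n] :
    (0 : Matrix n n ℂ).PosSemidef := by
  rw [← Matrix.diagonal_zero]
  exact Matrix.PosSemidef.diagonal fun i => le_refl 0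

lemma psd_real_smul {n : Type*} [Fintype n] [DecidableEq n] {A : Matrix n n ℂ}
    (hA : A.PosSemidef) {c : ℝ} (hc : 0 ≤ c) : (((c : ℝ) : ℂ) • A).PosSemidef := by
  refine Matrix.PosSemidef.of_dotProduct_mulVec_nonneg ?_ ?_
  · show (((c : ℝ) : ℂ) • A)ᴴ = _
    rw [Matrix.conjTranspose_smul, hA.1.eq]
    congr 1
    simp
  · intro x
    rw [Matrix.smul_mulVec, dotProduct_smul, smul_eq_mul]
    have : (0 : ℂ) ≤ ((c : ℝ) : ℂ) := by
      rw [Complex.le_def]; simp [hc]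
    exact mul_nonneg this (hA.dotProduct_mulVec_nonneg x)

lemma psd_trace_nonneg {n : Type*} [Fintype n] [DecidableEq n] {A : Matrix n n ℂ}
    (hA : A.PosSemidef) : 0 ≤ A.trace := by
  have h : ∀ i, 0 ≤ A i i := fun i => by
    simpa [dotProduct, Matrix.mulVec, Pi.single_apply] using hA.dotProduct_mulVec_nonneg (Pi.single i 1)
  exact Finset.sum_nonneg fun i _ => h i

open scoped MatrixOrder in
lemma trace_mul_psd_nonneg {n : Type*} [Fintype n] [DecidableEq n] {A B : Matrix n n ℂ}
    (hA : A.PosSemidef) (hB : B.PosSemidef) : 0 ≤ (A * B).trace := by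
  obtain ⟨C, rfl⟩ := CStarAlgebra.nonneg_iff_eq_star_mul_self.mp hA.nonneg
  rw [Matrix.mul_assoc, Matrix.trace_mul_comm]
  exact psd_trace_nonneg (by simpa [Matrix.mul_assoc, Matrix.star_eq_conjTranspose] using hB.mul_mul_conjTranspose_same C)

lemma traceNorm_of_sq {A : Matrix (Fin 2) (Fin 2) ℂ} {r : ℝ} (hr : 0 ≤ r)
    (h : Aᴴ * A = ((r^2 : ℝ) : ℂ) • 1) : traceNorm A = 2 * r := by
  have hB : Matrix.PosSemidef (((r:ℝ):ℂ) • (1 : Matrix (Fin 2) (Fin 2) ℂ)) := by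
    rw [Matrix.smul_one_eq_diagonal]
    exact Matrix.PosSemidef.diagonal fun i => by
      simp [Complex.le_def, hr]
  have hsq : (((r:ℝ):ℂ) • (1 : Matrix (Fin 2) (Fin 2) ℂ)) ^ 2 = Aᴴ * A := by
    rw [h, smul_pow, one_pow]
    push_cast
    ring_nf
  have hlamE : ∀ i, (Matrix.posSemidef_conjTranspose_mul_self A).1.eigenvalues i = r ^ 2 := by
    intro i
    have e := (Matrix.posSemidef_conjTranspose_mul_self A).1.eigenvalues_eq i
    have hn : star ⇑((Matrix.posSemidef_conjTranspose_mul_self A).1.eigenvectorBasis i) ⬝ᵥ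
        ⇑((Matrix.posSemidef_conjTranspose_mul_self A).1.eigenvectorBasis i) = 1 := by
      rw [dotProduct_comm, ← EuclideanSpace.inner_eq_star_dotProduct]
      simp [inner_self_eq_norm_sq_to_K,
        (Matrix.posSemidef_conjTranspose_mul_self A).1.eigenvectorBasis.orthonormal.1 i]
    have key : ∀ v : Fin 2 → ℂ, star v ⬝ᵥ v = 1 → RCLike.re (star v ⬝ᵥ ((Aᴴ * A) *ᵥ v)) = r ^ 2 := by
      intro v hv
      rw [h, Matrix.smul_mulVec, Matrix.one_mulVec, dotProduct_smul, hv]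
      simp [← Complex.ofReal_pow]
    rw [e, key _ hn]
  rw [traceNorm, Matrix.trace_mul_cycle, Unitary.coe_star_mul_self, Matrix.one_mul,
    Matrix.trace_diagonal, Fin.sum_univ_two]
  simp [hlamE, Real.sqrt_sq hr]
  ring

lemma entry_le_traceDist {σ : Matrix (Fin 2) (Fin 2) ℂ}
    (hherm : σ.IsHermitian) (htr : σ.trace = 1) (h00 : 0 ≤ σ 0 0) :
    (σ 0 0).re ≤ traceDist σ ket1 ∧
      (σ 0 1 = 0 → σ 1 0 = 0 → traceDist σ ket1 = (σ 0 0).re) := by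
  set r : ℝ := (σ 0 0).re with hr
  have hrnn : 0 ≤ r := (cx_nonneg_re h00)
  have h00' : σ 0 0 = (r : ℂ) := cx_nonneg_eq_re h00
  have h10 : σ 1 0 = (starRingEnd ℂ) (σ 0 1) := (hherm.apply 1 0).symm
  have h11 : σ 1 1 = 1 - (r : ℂ) := by
    have : σ 0 0 + σ 1 1 = 1 := by
      simpa [Matrix.trace, Fin.sum_univ_two, Matrix.diag] using htr
    rw [h00'] at this; linear_combination this
  have key : (σ - ket1)ᴴ * (σ - ket1)
      = (((Real.sqrt (r^2 + Complex.normSq (σ 0 1)))^2 : ℝ) : ℂ) • 1 := by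
    rw [Real.sq_sqrt (add_nonneg (sq_nonneg r) (Complex.normSq_nonneg _))]
    ext i j
    fin_cases i <;> fin_cases j <;>
      simp [Matrix.mul_apply, Fin.sum_univ_two, Matrix.conjTranspose_apply,
        Matrix.sub_apply, ket1, Matrix.one_apply, h00', h10, h11, Complex.ext_iff,
        Complex.normSq_apply, ← Complex.ofReal_pow] <;>
      exact ⟨by ring, by ring⟩
  have hTN := traceNorm_of_sq (Real.sqrt_nonneg _) key
  have hs : Real.sqrt (r^2) ≤ Real.sqrt (r^2 + Complex.normSq (σ 0 1)) :=
    Real.sqrt_le_sqrt (le_add_of_nonneg_right (Complex.normSq_nonneg _))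
  rw [Real.sqrt_sq hrnn] at hs
  constructor
  · rw [traceDist, hTN]; linarith
  · intro hb0 _
    rw [traceDist, hTN, hb0]
    simp [Real.sqrt_sq hrnn]

lemma trace_mul_stdBasisMatrix {n : Type*} [Fintype n] [DecidableEq n]
    (A : Matrix n n ℂ) (i j : n) : (A * Matrix.single i j 1).trace = A j i := by
  simp [Matrix.trace, Matrix.diag, Matrix.mul_apply, Matrix.single, ite_and,
    Matrix.of_apply, Finset.sum_ite_eq]

lemma stdBasisMatrix_decomp {n : Type*} [Fintype n] [DecidableEq n] (X : Matrix n n ℂ) :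
    X = ∑ i, ∑ j, X i j • Matrix.single i j (1:ℂ) := by
  conv_lhs => rw [Matrix.matrix_eq_sum_single X]
  congr 1; funext i; congr 1; funext j
  have := Matrix.smul_single (X i j) i j (1:ℂ)
  rw [smul_eq_mul, mul_one] at this
  rw [this]

lemma lmap_apply_eq_sum {n m : Type*} [Fintype n] [DecidableEq n] [Fintype m] [DecidableEq m]
    (F : Matrix n n ℂ →ₗ[ℂ] Matrix m m ℂ) (X : Matrix n n ℂ) (k l : m) :
    F X k l = ∑ i, ∑ j, X i j * F (Matrix.single i j 1) k l := by
  conv_lhs => rw [stdBasisMatrix_decomp X]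
  simp only [map_sum, LinearMap.map_smul, Matrix.sum_apply, Matrix.smul_apply, smul_eq_mul]

lemma trace_mul_slice {n : Type*} [Fintype n] [DecidableEq n] {m : Type*} [Fintype m] [DecidableEq m]
    (F : Matrix n n ℂ →ₗ[ℂ] Matrix m m ℂ) (X : Matrix n n ℂ) (k l : m) :
    ((Matrix.of fun j i => F (Matrix.single i j 1) k l) * X).trace = F X k l := by
  rw [lmap_apply_eq_sum F X k l]
  simp only [Matrix.trace, Matrix.diag, Matrix.mul_apply, Matrix.of_apply]
  rw [Finset.sum_comm]
  exact Finset.sum_congr rfl fun i _ => Finset.sum_congr rfl fun j _ => mul_comm _ _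

lemma slice_psd {n : Type*} [Fintype n] [DecidableEq n]
    (F : Matrix n n ℂ →ₗ[ℂ] Matrix (Fin 2) (Fin 2) ℂ) (hC : (choiMatrix F).PosSemidef)
    (k : Fin 2) :
    (Matrix.of fun j i => F (Matrix.single i j 1) k k).PosSemidef := by
  refine Matrix.PosSemidef.of_dotProduct_mulVec_nonneg ?_ ?_
  · ext i j
    simp only [Matrix.conjTranspose_apply, Matrix.of_apply]
    have h := congrFun (congrFun hC.1 ((j, k) : n × Fin 2)) ((i, k) : n × Fin 2)
    simpa [Matrix.conjTranspose_apply, choiMatrix] using h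
  · intro x
    set y : n × Fin 2 → ℂ := fun p => if p.2 = k then (starRingEnd ℂ) (x p.1) else 0 with hy
    have key : star x ⬝ᵥ (Matrix.of fun j i => F (Matrix.single i j 1) k k) *ᵥ x
        = star y ⬝ᵥ choiMatrix F *ᵥ y := by
      simp only [dotProduct, Matrix.mulVec, Fintype.sum_prod_type, hy, Pi.star_apply,
        apply_ite (starRingEnd ℂ), map_zero,
        star_zero, RCLike.star_def, Complex.conj_conj, choiMatrix, mul_ite, ite_mul,
        zero_mul, mul_zero, Finset.sum_ite_eq', Finset.mem_univ, if_true,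
        Matrix.of_apply]
      simp only [Finset.mul_sum]
      rw [Finset.sum_comm]
      exact Finset.sum_congr rfl fun i _ => Finset.sum_congr rfl fun j _ => by ring
    rw [key]
    exact hC.dotProduct_mulVec_nonneg y

lemma one_sub_slice {n : Type*} [Fintype n] [DecidableEq n]
    (F : Matrix n n ℂ →ₗ[ℂ] Matrix (Fin 2) (Fin 2) ℂ)
    (hTP : ∀ X, (F X).trace = X.trace) :
    (1 : Matrix n n ℂ) - (Matrix.of fun j i => F (Matrix.single i j 1) 1 1)
      = Matrix.of fun j i => F (Matrix.single i j 1) 0 0 := by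
  ext j i
  have h := hTP (Matrix.single i j 1)
  rw [Matrix.trace_fin_two] at h
  by_cases hij : i = j
  · subst hij
    rw [Matrix.trace_single_eq_same] at h
    simp only [Matrix.sub_apply, Matrix.one_apply_eq, Matrix.of_apply]
    exact (eq_sub_of_add_eq h).symm
  · rw [Matrix.trace_single_eq_of_ne i j (1:ℂ) hij] at h
    simp only [Matrix.sub_apply, Matrix.one_apply_ne (Ne.symm hij), Matrix.of_apply]
    exact (eq_sub_of_add_eq h).symm

lemma herm_pres {n : Type*} [Fintype n] [DecidableEq n]
    (F : Matrix n n ℂ →ₗ[ℂ] Matrix (Fin 2) (Fin 2) ℂ)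
    (hC : (choiMatrix F).PosSemidef) {X : Matrix n n ℂ} (hX : X.IsHermitian) :
    (F X).IsHermitian := by
  ext k l
  rw [Matrix.conjTranspose_apply, lmap_apply_eq_sum F X l k, lmap_apply_eq_sum F X k l]
  rw [star_sum]
  rw [Finset.sum_comm]
  refine Finset.sum_congr rfl fun i _ => ?_
  rw [star_sum]
  refine Finset.sum_congr rfl fun j _ => ?_
  rw [star_mul']
  congr 1
  · exact hX.apply j i
  · have h := congrFun (congrFun hC.1 ((j, k) : n × Fin 2)) ((i, l) : n × Fin 2)
    simpa [Matrix.conjTranspose_apply, choiMatrix] using h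

noncomputable def measChan {n : Type*} [Fintype n] [DecidableEq n]
    (E : Matrix n n ℂ) : Matrix n n ℂ →ₗ[ℂ] Matrix (Fin 2) (Fin 2) ℂ where
  toFun X := Matrix.of fun k l =>
    if k = l then (if k = 0 then ((1 - E) * X).trace else (E * X).trace) else 0
  map_add' X Y := by
    ext k l
    by_cases h : k = l
    · subst h
      by_cases h2 : k = 0 <;> simp [h2, Matrix.mul_add, Matrix.trace_add]
    · simp [h]
  map_smul' c X := by
    ext k l
    by_cases h : k = l
    · subst h
      by_cases h2 : k = 0 <;> simp [h2, Matrix.mul_smul, Matrix.trace_smul]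
    · simp [h]

lemma measChan_apply {n : Type*} [Fintype n] [DecidableEq n] (E : Matrix n n ℂ)
    (X : Matrix n n ℂ) (k l : Fin 2) :
    measChan E X k l
      = if k = l then (if k = 0 then ((1 - E) * X).trace else (E * X).trace) else 0 := rfl

lemma measChan_trace {n : Type*} [Fintype n] [DecidableEq n] (E : Matrix n n ℂ)
    (X : Matrix n n ℂ) : (measChan E X).trace = X.trace := by
  rw [Matrix.trace_fin_two, measChan_apply, measChan_apply]
  norm_num
  rw [← Matrix.trace_add, ← Matrix.add_mul]
  norm_num

lemma measChan_choi_psd {n : Type*} [Fintype n] [DecidableEq n] {E : Matrix n n ℂ}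
    (hE : E.PosSemidef) (hE' : (1 - E).PosSemidef) :
    (choiMatrix (measChan E)).PosSemidef := by
  have entry : ∀ (i j : n) (k l : Fin 2), choiMatrix (measChan E) (i, k) (j, l)
      = if k = l then (if k = 0 then (1 - E) j i else E j i) else 0 := by
    intro i j k l
    have h0 : choiMatrix (measChan E) (i, k) (j, l)
        = if k = l then (if k = 0 then ((1 - E) * Matrix.single i j (1:ℂ)).trace
          else (E * Matrix.single i j (1:ℂ)).trace) else 0 := rfl
    rw [h0, trace_mul_stdBasisMatrix, trace_mul_stdBasisMatrix]
  refine Matrix.PosSemidef.of_dotProduct_mulVec_nonneg ?_ ?_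
  · ext ⟨i, k⟩ ⟨j, l⟩
    rw [Matrix.conjTranspose_apply, entry, entry]
    by_cases hkl : l = k
    · subst hkl
      simp only [if_pos rfl]
      by_cases hk : l = 0
      · simp only [if_pos hk, hk, if_true]
        exact hE'.1.apply j i
      · simp only [if_neg hk]
        exact hE.1.apply j i
    · rw [if_neg hkl, if_neg (Ne.symm hkl), star_zero]
  · intro x
    have expand : star x ⬝ᵥ choiMatrix (measChan E) *ᵥ x
        = (star (fun j => (starRingEnd ℂ) (x (j, 0))) ⬝ᵥ (1 - E) *ᵥ (fun j => (starRingEnd ℂ) (x (j, 0))))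
          + (star (fun j => (starRingEnd ℂ) (x (j, 1))) ⬝ᵥ E *ᵥ (fun j => (starRingEnd ℂ) (x (j, 1)))) := by
      simp only [dotProduct, Matrix.mulVec, Fintype.sum_prod_type, Pi.star_apply, RCLike.star_def,
        Complex.conj_conj, entry, mul_ite, ite_mul, zero_mul, mul_zero, Fin.sum_univ_two,
        Fin.isValue, if_true, one_ne_zero, if_false, Finset.sum_const_zero, add_zero, zero_add,
        Finset.mul_sum]
      simp only [show ¬((0:Fin 2) = 1) by decide, if_false, add_zero]
      rw [Finset.sum_add_distrib]
      congr 1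
      · rw [Finset.sum_comm]
        exact Finset.sum_congr rfl fun i _ => Finset.sum_congr rfl fun j _ => by ring
      · rw [Finset.sum_comm]
        exact Finset.sum_congr rfl fun i _ => Finset.sum_congr rfl fun j _ => by ring
    rw [expand]
    exact add_nonneg (hE'.dotProduct_mulVec_nonneg _) (hE.dotProduct_mulVec_nonneg _)

end StmtEightAux

/-- one-shot work extraction into a dirty battery under GPO is
characterized by the smoothed min-relative entropy (hypothesis testing) value
`α*`: (a) every achievable `M` satisfies `M ≤ 1/α*` (with `1/0 = ∞`, phrased
multiplicatively), and (b) every `1 < M < 1/α*` is achievable. -/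
theorem stmt_8 {d : ℕ} (ε : ℝ) (hε : ε ∈ Set.Ico (0:ℝ) 1)
    (𝓟 𝓔 : Set (Matrix (Fin d) (Fin d) ℂ))
    (h𝓟ne : 𝓟.Nonempty) (h𝓔ne : 𝓔.Nonempty)
    (h𝓟 : ∀ ρ ∈ 𝓟, IsDensityMatrix ρ) (h𝓔 : ∀ τ ∈ 𝓔, IsDensityMatrix τ)
    (αstar : ℝ)
    (hα : αstar = sInf {a : ℝ | ∃ E : Matrix (Fin d) (Fin d) ℂ, IsTest E ∧
        (∀ ρ ∈ 𝓟, ((1 - E) * ρ).trace.re ≤ ε) ∧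
        a = sSup {r : ℝ | ∃ τ ∈ 𝓔, r = (E * τ).trace.re}}) :
    (∀ M : ℝ, 1 < M → AchievableDirty ε M 𝓟 𝓔 → M * αstar ≤ 1) ∧
    (∀ M : ℝ, 1 < M → M * αstar < 1 → AchievableDirty ε M 𝓟 𝓔) := by
  obtain ⟨hε0, hε1⟩ := hε
  -- basic facts about tests against density matrices
  have hbound : ∀ (E : Matrix (Fin d) (Fin d) ℂ), IsTest E → ∀ τ ∈ 𝓔,
      0 ≤ (E * τ).trace.re ∧ (E * τ).trace.re ≤ 1 := by
    intro E hE τ hτ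
    have h1 := cx_nonneg_re (trace_mul_psd_nonneg hE.1 (h𝓔 τ hτ).1)
    have h2 := cx_nonneg_re (trace_mul_psd_nonneg hE.2 (h𝓔 τ hτ).1)
    have h3 : ((1 - E) * τ).trace = 1 - (E * τ).trace := by
      rw [Matrix.sub_mul, Matrix.trace_sub, Matrix.one_mul, (h𝓔 τ hτ).2]
    rw [h3] at h2
    simp only [Complex.sub_re, Complex.one_re] at h2
    exact ⟨h1, by linarith⟩
  have hRbdd : ∀ (E : Matrix (Fin d) (Fin d) ℂ), IsTest E →
      BddAbove {r : ℝ | ∃ τ ∈ 𝓔, r = (E * τ).trace.re} := by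
    intro E hE
    exact ⟨1, by rintro r ⟨τ, hτ, rfl⟩; exact (hbound E hE τ hτ).2⟩
  have hRne : ∀ (E : Matrix (Fin d) (Fin d) ℂ),
      {r : ℝ | ∃ τ ∈ 𝓔, r = (E * τ).trace.re}.Nonempty := by
    intro E
    obtain ⟨τ, hτ⟩ := h𝓔ne
    exact ⟨_, τ, hτ, rfl⟩
  have hSlb : ∀ a ∈ {a : ℝ | ∃ E : Matrix (Fin d) (Fin d) ℂ, IsTest E ∧
      (∀ ρ ∈ 𝓟, ((1 - E) * ρ).trace.re ≤ ε) ∧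
      a = sSup {r : ℝ | ∃ τ ∈ 𝓔, r = (E * τ).trace.re}}, (0:ℝ) ≤ a := by
    rintro a ⟨E, hE, _, rfl⟩
    obtain ⟨τ, hτ⟩ := h𝓔ne
    have h1 := (hbound E hE τ hτ).1
    have h2 : (E * τ).trace.re ≤ sSup {r : ℝ | ∃ τ ∈ 𝓔, r = (E * τ).trace.re} :=
      le_csSup (hRbdd E hE) ⟨τ, hτ, rfl⟩
    linarith
  have hSbdd : BddBelow {a : ℝ | ∃ E : Matrix (Fin d) (Fin d) ℂ, IsTest E ∧
      (∀ ρ ∈ 𝓟, ((1 - E) * ρ).trace.re ≤ ε) ∧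
      a = sSup {r : ℝ | ∃ τ ∈ 𝓔, r = (E * τ).trace.re}} := ⟨0, hSlb⟩
  constructor
  · -- (a) converse
    rintro M hM ⟨F, ⟨hChoi, hTP⟩, hclose, hwork⟩
    have hM0 : 0 < M := by linarith
    have h1sub := one_sub_slice F hTP
    set Emat : Matrix (Fin d) (Fin d) ℂ :=
      Matrix.of fun j i => F (Matrix.single i j 1) 1 1 with hEmat
    have hEpsd : Emat.PosSemidef := slice_psd F hChoi 1
    have hE'psd : (1 - Emat).PosSemidef := by
      rw [hEmat, h1sub]; exact slice_psd F hChoi 0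
    have htrE : ∀ X, (Emat * X).trace = F X 1 1 := fun X => trace_mul_slice F X 1 1
    have htr1E : ∀ X, ((1 - Emat) * X).trace = F X 0 0 := fun X => by
      rw [hEmat, h1sub]; exact trace_mul_slice F X 0 0
    have hcond : ∀ ρ ∈ 𝓟, ((1 - Emat) * ρ).trace.re ≤ ε := by
      intro ρ hρ
      obtain ⟨hρpsd, hρtr⟩ := h𝓟 ρ hρ
      have hσH : (F ρ).IsHermitian := herm_pres F hChoi hρpsd.1
      have hσtr : (F ρ).trace = 1 := by rw [hTP ρ, hρtr]
      have h00 : 0 ≤ F ρ 0 0 := by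
        rw [← htr1E ρ]; exact trace_mul_psd_nonneg hE'psd hρpsd
      have hle := (entry_le_traceDist hσH hσtr h00).1
      rw [htr1E ρ]
      exact le_trans hle (hclose ρ hρ)
    have hRub : ∀ r ∈ {r : ℝ | ∃ τ ∈ 𝓔, r = (Emat * τ).trace.re}, r ≤ 1 / M := by
      rintro r ⟨τ, hτ, rfl⟩
      obtain ⟨Mτ, hMτ, hFτ⟩ := hwork τ hτ
      have hMτ0 : 0 < Mτ := by linarith
      have hent : (Emat * τ).trace = ((1 / Mτ : ℝ) : ℂ) := by
        rw [htrE τ, hFτ]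
        simp [piM]
      rw [hent]
      simp only [Complex.ofReal_re]
      exact one_div_le_one_div_of_le hM0 hMτ
    have ha0 : sSup {r : ℝ | ∃ τ ∈ 𝓔, r = (Emat * τ).trace.re} ≤ 1 / M :=
      csSup_le (hRne Emat) hRub
    have hmem : sSup {r : ℝ | ∃ τ ∈ 𝓔, r = (Emat * τ).trace.re} ∈
        {a : ℝ | ∃ E : Matrix (Fin d) (Fin d) ℂ, IsTest E ∧
          (∀ ρ ∈ 𝓟, ((1 - E) * ρ).trace.re ≤ ε) ∧
          a = sSup {r : ℝ | ∃ τ ∈ 𝓔, r = (E * τ).trace.re}} :=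
      ⟨Emat, ⟨hEpsd, hE'psd⟩, hcond, rfl⟩
    have hfin : αstar ≤ 1 / M := by
      rw [hα]
      exact le_trans (csInf_le hSbdd hmem) ha0
    have := mul_le_mul_of_nonneg_left hfin hM0.le
    rwa [mul_one_div, div_self hM0.ne'] at this
  · -- (b) achievability
    rintro M hM hlt
    have hM0 : 0 < M := by linarith
    have hM1 : 1 / M < 1 := by rw [div_lt_one hM0]; exact hM
    have hαlt : αstar < 1 / M := by
      rw [lt_div_iff₀ hM0]
      nlinarith
    have hSne : Set.Nonempty {a : ℝ | ∃ E : Matrix (Fin d) (Fin d) ℂ, IsTest E ∧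
        (∀ ρ ∈ 𝓟, ((1 - E) * ρ).trace.re ≤ ε) ∧
        a = sSup {r : ℝ | ∃ τ ∈ 𝓔, r = (E * τ).trace.re}} := by
      refine ⟨_, 1, ⟨psd_one', by rw [sub_self]; exact psd_zero'⟩, ?_, rfl⟩
      intro ρ hρ
      simp [hε0]
    have hexists := exists_lt_of_csInf_lt hSne (hα ▸ hαlt)
    obtain ⟨a, ⟨E, hTest, hcond, ha_eq⟩, halt⟩ := hexists
    have hub : ∀ τ ∈ 𝓔, (E * τ).trace.re ≤ a := by
      intro τ hτ
      rw [ha_eq]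
      exact le_csSup (hRbdd E hTest) ⟨τ, hτ, rfl⟩
    have ha0 : 0 ≤ a := hSlb a ⟨E, hTest, hcond, ha_eq⟩
    have h1a : 0 < 1 - a := by linarith
    set lam : ℝ := (1 / M - a) / (1 - a) with hlamdef
    have hlam0 : 0 < lam := div_pos (by linarith) h1a
    have hlam1 : lam ≤ 1 := (div_le_one h1a).mpr (by linarith)
    have hkey : (1 - lam) * a + lam = 1 / M := by
      rw [hlamdef]
      field_simp
      ring
    set E'' : Matrix (Fin d) (Fin d) ℂ :=
      ((1 - lam : ℝ) : ℂ) • E + ((lam : ℝ) : ℂ) • (1 : Matrix (Fin d) (Fin d) ℂ) with hE''def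
    have hE''psd : E''.PosSemidef :=
      (psd_real_smul hTest.1 (by linarith)).add (psd_real_smul psd_one' hlam0.le)
    have h1E'' : (1 : Matrix (Fin d) (Fin d) ℂ) - E'' = ((1 - lam : ℝ) : ℂ) • (1 - E) := by
      rw [hE''def, smul_sub]
      push_cast
      module
    have h1E''psd : ((1 : Matrix (Fin d) (Fin d) ℂ) - E'').PosSemidef := by
      rw [h1E'']
      exact psd_real_smul hTest.2 (by linarith)
    have hChoiPsd := measChan_choi_psd hE''psd h1E''psd
    refine ⟨measChan E'', ⟨hChoiPsd, measChan_trace E''⟩, ?_, ?_⟩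
    · -- closeness on 𝓟
      intro ρ hρ
      obtain ⟨hρpsd, hρtr⟩ := h𝓟 ρ hρ
      have hσH := herm_pres (measChan E'') hChoiPsd hρpsd.1
      have hσtr : (measChan E'' ρ).trace = 1 := by rw [measChan_trace, hρtr]
      have h00c : measChan E'' ρ 0 0 = ((1 - E'') * ρ).trace := by
        rw [measChan_apply]; simp
      have h00 : 0 ≤ measChan E'' ρ 0 0 := by
        rw [h00c]; exact trace_mul_psd_nonneg h1E''psd hρpsd
      have hdiag := (entry_le_traceDist hσH hσtr h00).2
        (by rw [measChan_apply]; simp) (by rw [measChan_apply]; simp)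
      rw [hdiag, h00c]
      have hfac : ((1 - E'') * ρ).trace = ((1 - lam : ℝ) : ℂ) * ((1 - E) * ρ).trace := by
        rw [h1E'', Matrix.smul_mul, Matrix.trace_smul, smul_eq_mul]
      rw [hfac, Complex.re_ofReal_mul]
      have h1 := hcond ρ hρ
      have h2 := cx_nonneg_re (trace_mul_psd_nonneg hTest.2 hρpsd)
      nlinarith
    · -- work extraction on 𝓔
      intro τ hτ
      obtain ⟨hτpsd, hτtr⟩ := h𝓔 τ hτ
      have ht0 : 0 ≤ (E'' * τ).trace := trace_mul_psd_nonneg hE''psd hτpsd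
      set t : ℝ := (E'' * τ).trace.re with htdef
      have htc : (E'' * τ).trace = ((t : ℝ) : ℂ) := cx_nonneg_eq_re ht0
      have hsplit : (E'' * τ).trace = ((1 - lam : ℝ) : ℂ) * (E * τ).trace + ((lam : ℝ) : ℂ) := by
        rw [hE''def, Matrix.add_mul, Matrix.trace_add, Matrix.smul_mul, Matrix.smul_mul,
          Matrix.trace_smul, Matrix.trace_smul, Matrix.one_mul, hτtr]
        simp [smul_eq_mul]
      have ht_re : t = (1 - lam) * (E * τ).trace.re + lam := by
        rw [htdef, hsplit]
        simp [Complex.add_re, Complex.re_ofReal_mul]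
      have htlb : lam ≤ t := by
        have := cx_nonneg_re (trace_mul_psd_nonneg hTest.1 hτpsd)
        nlinarith
      have htpos : 0 < t := lt_of_lt_of_le hlam0 htlb
      have htub : t ≤ 1 / M := by
        have h1 := hub τ hτ
        nlinarith
      have hMle : M ≤ 1 / t := by
        have := one_div_le_one_div_of_le htpos htub
        rwa [one_div_one_div] at this
      refine ⟨1 / t, hMle, ?_⟩
      have hsubtr : ((1 - E'') * τ).trace = 1 - ((t : ℝ) : ℂ) := by
        rw [Matrix.sub_mul, Matrix.trace_sub, Matrix.one_mul, hτtr, htc]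
      have hinv : 1 / (1 / t) = t := one_div_one_div t
      ext k l
      fin_cases k <;> fin_cases l <;>
        simp [measChan_apply, piM, Matrix.diagonal, hsubtr, htc, hinv] <;>
        push_cast <;> ring
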